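/- Let p ≥ 1 and let K ⊆ M^+(X) be τ_A-compact. Then M_p(K) = M_{p,c}^A(K). -/

import Mathlib

open MeasureTheory Filter Topology BoundedContinuousFunction ENNReal NNReal

noncomputable section

namespace AMPaper

variable (X : Type*) [TopologicalSpace X] [MeasurableSpace X]

/-- The topology `τ_b` on the space of finite nonnegative Borel measures:
the weak topology induced by the pairings `μ ↦ ∫ g dμ`, `g ∈ C_b(X)`. -/
def taub : TopologicalSpace (FiniteMeasure X) :=
  ⨅ g : X →ᵇ ℝ,
    TopologicalSpace.induced (fun μ : FiniteMeasure X => ∫ x, g x ∂(μ : Measure X)) inferInstance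

/-- The topology `τ_A` induced by the pairings with functions from `A ⊆ C_b(X)`. -/
def tauA (A : Set (X →ᵇ ℝ)) : TopologicalSpace (FiniteMeasure X) :=
  ⨅ g ∈ A,
    TopologicalSpace.induced (fun μ : FiniteMeasure X => ∫ x, g x ∂(μ : Measure X)) inferInstance

variable {X}

/-- A closed linear sublattice of `C_b(X)`. -/
structure IsClosedSublattice (A : Set (X →ᵇ ℝ)) : Prop where
  isClosed : IsClosed A
  zero_mem : (0 : X →ᵇ ℝ) ∈ A
  add_mem : ∀ ⦃f g : X →ᵇ ℝ⦄, f ∈ A → g ∈ A → f + g ∈ A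
  smul_mem : ∀ (c : ℝ) ⦃f : X →ᵇ ℝ⦄, f ∈ A → c • f ∈ A
  sup_mem : ∀ ⦃f g h : X →ᵇ ℝ⦄, f ∈ A → g ∈ A → (∀ x, h x = max (f x) (g x)) → h ∈ A
  inf_mem : ∀ ⦃f g h : X →ᵇ ℝ⦄, f ∈ A → g ∈ A → (∀ x, h x = min (f x) (g x)) → h ∈ A

/-- An acceptable subspace of `C_b(X)`: a closed linear sublattice satisfying
the separation property (A2). -/
structure IsAcceptable (A : Set (X →ᵇ ℝ)) extends IsClosedSublattice A : Prop where
  sep : ∀ F : Set X, IsClosed F → ∀ x ∉ F, ∃ g ∈ A,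
    (∀ y, 0 ≤ g y) ∧ (∀ y, g y ≤ 1) ∧ g x = 1 ∧ ∀ y ∈ F, g y = 0

/-- A lower semicontinuous `ρ : X → [0,∞]` is admissible for `E` if `∫ ρ dμ ≥ 1` for all `μ ∈ E`. -/
def AdmissibleFun (ρ : X → ℝ≥0∞) (E : Set (FiniteMeasure X)) : Prop :=
  LowerSemicontinuous ρ ∧ ∀ μ ∈ E, 1 ≤ ∫⁻ x, ρ x ∂(μ : Measure X)

/-- The `M_p` modulus of a family of measures. -/
def Mmod (p : ℝ) (m : Measure X) (E : Set (FiniteMeasure X)) : ℝ≥0∞ :=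
  ⨅ (ρ : X → ℝ≥0∞) (_ : AdmissibleFun ρ E), ∫⁻ x, ρ x ^ p ∂m

/-- The continuous modulus `M_{p,c}^A`, with test functions nonnegative elements of `A`. -/
def McMod (p : ℝ) (A : Set (X →ᵇ ℝ)) (m : Measure X) (E : Set (FiniteMeasure X)) : ℝ≥0∞ :=
  ⨅ (g : X →ᵇ ℝ) (_ : g ∈ A ∧ (∀ x, 0 ≤ g x) ∧
      ∀ μ ∈ E, 1 ≤ ∫⁻ x, ENNReal.ofReal (g x) ∂(μ : Measure X)),
    ∫⁻ x, ENNReal.ofReal (g x) ^ p ∂m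

/-- A sequence of lower semicontinuous functions `ρ_j : X → [0,∞]` is an admissible sequence
for `E` if `liminf_j ∫ ρ_j dμ ≥ 1` for all `μ ∈ E`. -/
def AdmissibleSeq (ρ : ℕ → X → ℝ≥0∞) (E : Set (FiniteMeasure X)) : Prop :=
  (∀ j, LowerSemicontinuous (ρ j)) ∧
    ∀ μ ∈ E, 1 ≤ Filter.liminf (fun j => ∫⁻ x, ρ j x ∂(μ : Measure X)) Filter.atTop

/-- The approximation modulus `AM_p` of a family of measures. -/
def AMmod (p : ℝ) (m : Measure X) (E : Set (FiniteMeasure X)) : ℝ≥0∞ :=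
  ⨅ (ρ : ℕ → X → ℝ≥0∞) (_ : AdmissibleSeq ρ E),
    Filter.liminf (fun j => ∫⁻ x, ρ j x ^ p ∂m) Filter.atTop

/-- The continuous approximation modulus `AM_{p,c}^A`. -/
def AMcMod (p : ℝ) (A : Set (X →ᵇ ℝ)) (m : Measure X) (E : Set (FiniteMeasure X)) : ℝ≥0∞ :=
  ⨅ (g : ℕ → X →ᵇ ℝ) (_ : (∀ j, g j ∈ A ∧ ∀ x, 0 ≤ g j x) ∧
      ∀ μ ∈ E, 1 ≤ Filter.liminf
        (fun j => ∫⁻ x, ENNReal.ofReal (g j x) ∂(μ : Measure X)) Filter.atTop),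
    Filter.liminf (fun j => ∫⁻ x, ENNReal.ofReal (g j x) ^ p ∂m) Filter.atTop

/-- The `L^q(m)`-norm of a function `f : X → [0,∞]`. -/
def lqNorm (q : ℝ≥0∞) (m : Measure X) (f : X → ℝ≥0∞) : ℝ≥0∞ :=
  if q = ∞ then essSup f m else (∫⁻ x, f x ^ q.toReal ∂m) ^ (1 / q.toReal)

variable (X) in
/-- The `p`-content (depending on `p` only through the conjugate exponent `q`):
the supremum of the outer measures `η*(E)` over all plans `η` — finite Borel measures on
`(M^+(X), τ_b)` — whose barycenter `η^#` is absolutely continuous w.r.t. `m` with density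
of `L^q(m)`-norm at most `1`. -/
def Ct (q : ℝ≥0∞) (m : Measure X) (E : Set (FiniteMeasure X)) : ℝ≥0∞ :=
  ⨆ (η : @Measure (FiniteMeasure X) (@borel (FiniteMeasure X) (taub X)))
    (_ : η Set.univ < ∞ ∧ ∃ f : X → ℝ≥0∞, Measurable f ∧
      (∀ B : Set X, MeasurableSet B → (∫⁻ μ, (μ : Measure X) B ∂η) = ∫⁻ x in B, f x ∂m) ∧
      lqNorm q m f ≤ 1),
    η E



/-- In a second-countable space, a pointwise supremum of continuous `ℝ≥0∞`-valued functions
equals the supremum of a countable subfamily. -/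
lemma countable_iSup {X : Type*} [TopologicalSpace X] [SecondCountableTopology X]
    {ι : Type*} [Nonempty ι] (f : ι → X → ℝ≥0∞) (hf : ∀ i, Continuous (f i)) :
    ∃ s : ℕ → ι, ∀ x, ⨆ n, f (s n) x = ⨆ i, f i x := by
  have hV : ∀ q : ℚ, ∃ t : Set ι, t.Countable ∧
      ⋃ i ∈ t, {x | ((Real.toNNReal q : ℝ≥0∞)) < f i x}
        = ⋃ i, {x | ((Real.toNNReal q : ℝ≥0∞)) < f i x} := fun q =>
    TopologicalSpace.isOpen_iUnion_countable _ (fun i => isOpen_Ioi.preimage (hf i))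
  choose t ht htU using hV
  have hTc : (insert (Classical.arbitrary ι) (⋃ q : ℚ, t q)).Countable :=
    (Set.countable_iUnion ht).insert _
  obtain ⟨s, hs⟩ := hTc.exists_eq_range ⟨_, Set.mem_insert _ _⟩
  refine ⟨s, fun x => ?_⟩
  refine le_antisymm (iSup_le fun n => le_iSup (fun i => f i x) (s n)) ?_
  refine forall_lt_iff_le.mp fun b hb => ?_
  obtain ⟨i, hi⟩ := lt_iSup_iff.mp hb
  obtain ⟨q, -, hbq, hqf⟩ := ENNReal.lt_iff_exists_rat_btwn.mp hi
  have hx : x ∈ ⋃ j ∈ t q, {x | ((Real.toNNReal q : ℝ≥0∞)) < f j x} := by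
    rw [htU q]; exact Set.mem_iUnion.mpr ⟨i, hqf⟩
  obtain ⟨j, hjt, hjx⟩ := Set.mem_iUnion₂.mp hx
  have hjr : j ∈ Set.range s := by
    rw [← hs]; exact Set.mem_insert_of_mem _ (Set.mem_iUnion.mpr ⟨q, hjt⟩)
  obtain ⟨n, rfl⟩ := hjr
  exact lt_of_lt_of_le hbq ((lt_of_lt_of_le hjx (le_iSup (fun n => f (s n) x) n)).le)

/-- Key estimate: for an admissible `ρ` and `c > 1`, the continuous modulus is bounded by
`c^p` times the `p`-energy of `ρ`. -/
lemma mcMod_le_aux {X : Type*} [TopologicalSpace X] [PolishSpace X] [MeasurableSpace X]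
    [BorelSpace X] (m : Measure X) (A : Set (X →ᵇ ℝ)) (hA : IsAcceptable A)
    (p : ℝ) (hp : 1 ≤ p) (K : Set (FiniteMeasure X)) (hK : @IsCompact _ (tauA X A) K)
    (ρ : X → ℝ≥0∞) (hρ : AdmissibleFun ρ K) (c : ℝ) (hc : 1 < c) :
    McMod p A m K ≤ ENNReal.ofReal c ^ p * ∫⁻ x, ρ x ^ p ∂m := by
  have hc0 : (0:ℝ) < c := lt_trans one_pos hc
  have hp0 : (0:ℝ) ≤ p := le_trans zero_le_one hp
  set P : (X →ᵇ ℝ) → Prop :=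
    fun h => h ∈ A ∧ (∀ y, 0 ≤ h y) ∧ ∀ y, ENNReal.ofReal (h y) ≤ ρ y with hPdef
  have hP0 : P 0 := ⟨hA.zero_mem, fun y => le_refl 0, fun y => by simp⟩
  haveI : Nonempty {h : X →ᵇ ℝ // P h} := ⟨⟨0, hP0⟩⟩
  -- Step 1: the pointwise supremum of test functions below `ρ` equals `ρ`.
  have hsup : ∀ x, ⨆ i : {h : X →ᵇ ℝ // P h}, ENNReal.ofReal (i.1 x) = ρ x := by
    intro x
    refine le_antisymm (iSup_le fun i => i.2.2.2 x) (forall_lt_iff_le.mp fun b hb => ?_)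
    obtain ⟨b', hbb', hb'ρ⟩ := exists_between hb
    have hb'top : b' ≠ ∞ := hb'ρ.ne_top
    have hFo : IsOpen {y | b' < ρ y} := hρ.1.isOpen_preimage b'
    have hFc : IsClosed {y | ρ y ≤ b'} := by
      have := hFo.isClosed_compl
      convert this using 1
      ext y; simp [not_lt]
    have hxF : x ∉ {y | ρ y ≤ b'} := by simp only [Set.mem_setOf_eq, not_le]; exact hb'ρ
    obtain ⟨g, hgA, hg0, hg1, hgx, hgF⟩ := hA.sep _ hFc x hxF
    set t := b'.toReal with htdef
    have ht0 : 0 ≤ t := ENNReal.toReal_nonneg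
    have hb' : ENNReal.ofReal t = b' := ENNReal.ofReal_toReal hb'top
    have hPh : P (t • g) := by
      refine ⟨hA.smul_mem t hgA, fun y => ?_, fun y => ?_⟩
      · simpa using mul_nonneg ht0 (hg0 y)
      · by_cases hy : y ∈ {y | ρ y ≤ b'}
        · simp [hgF y hy]
        · have h1 : (t • g) y ≤ t := by
            simpa using mul_le_of_le_one_right ht0 (hg1 y)
          calc ENNReal.ofReal ((t • g) y) ≤ ENNReal.ofReal t := ENNReal.ofReal_le_ofReal h1
            _ = b' := hb'
            _ ≤ ρ y := le_of_lt (by simpa [not_le] using hy)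
    have : b' ≤ ⨆ i : {h : X →ᵇ ℝ // P h}, ENNReal.ofReal (i.1 x) := by
      refine le_trans (le_of_eq ?_)
        (le_iSup (fun i : {h : X →ᵇ ℝ // P h} => ENNReal.ofReal (i.1 x)) ⟨t • g, hPh⟩)
      simp [hgx, hb'.symm]
    exact lt_of_lt_of_le hbb' this
  -- Step 2: countable subfamily and monotone maxima.
  obtain ⟨s, hs⟩ := countable_iSup (fun i : {h : X →ᵇ ℝ // P h} => fun x => ENNReal.ofReal (i.1 x))
    (fun i => ENNReal.continuous_ofReal.comp i.1.continuous)
  set H : ℕ → (X →ᵇ ℝ) := fun n => Nat.rec (s 0).1 (fun k Hk => Hk ⊔ (s (k+1)).1) n with hHdef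
  have hHsucc : ∀ n, H (n+1) = H n ⊔ (s (n+1)).1 := fun n => rfl
  have hofRealMono : Monotone ENNReal.ofReal := fun a b h => ENNReal.ofReal_le_ofReal h
  have hHP : ∀ n, P (H n) := by
    intro n; induction n with
    | zero => exact (s 0).2
    | succ k ih =>
      rw [hHsucc]
      refine ⟨hA.sup_mem ih.1 (s (k+1)).2.1
        (fun x => by simp), fun y => ?_, fun y => ?_⟩
      · exact le_trans (ih.2.1 y) le_sup_left
      · have : ENNReal.ofReal ((H k ⊔ (s (k+1)).1) y)
            = max (ENNReal.ofReal (H k y)) (ENNReal.ofReal ((s (k+1)).1 y)) := by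
          rw [show (H k ⊔ (s (k+1)).1) y = max (H k y) ((s (k+1)).1 y) by simp]
          exact hofRealMono.map_max
        rw [this]
        exact max_le (ih.2.2 y) ((s (k+1)).2.2.2 y)
  have hHmono : Monotone H := monotone_nat_of_le_succ fun n => by rw [hHsucc]; exact le_sup_left
  have hHge : ∀ n, (s n).1 ≤ H n := by
    intro n; cases n with
    | zero => exact le_refl _
    | succ k => rw [hHsucc]; exact le_sup_right
  have hsupH : ∀ x, ⨆ n, ENNReal.ofReal (H n x) = ρ x := by
    intro x
    refine le_antisymm (iSup_le fun n => (hHP n).2.2 x) ?_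
    rw [← hsup x, ← hs x]
    exact iSup_mono fun n => ENNReal.ofReal_le_ofReal (hHge n x)
  have hmeas : ∀ n, Measurable fun x => ENNReal.ofReal (H n x) := fun n =>
    ENNReal.measurable_ofReal.comp (H n).continuous.measurable
  have hMCT : ∀ (μ : Measure X), ∫⁻ x, ρ x ∂μ = ⨆ n, ∫⁻ x, ENNReal.ofReal (H n x) ∂μ := by
    intro μ
    rw [← lintegral_iSup hmeas (fun i j hij x => ENNReal.ofReal_le_ofReal (hHmono hij x))]
    exact lintegral_congr fun x => (hsupH x).symm
  -- Step 3: open cover and compactness.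
  set U : ℕ → Set (FiniteMeasure X) :=
    fun n => (fun μ : FiniteMeasure X => ∫ x, H n x ∂(μ : Measure X)) ⁻¹' Set.Ioi c⁻¹ with hUdef
  letI tA : TopologicalSpace (FiniteMeasure X) := tauA X A
  have hcont : ∀ n, Continuous (fun μ : FiniteMeasure X => ∫ x, H n x ∂(μ : Measure X)) := by
    intro n
    show @Continuous _ _ (⨅ g ∈ A, TopologicalSpace.induced
      (fun μ : FiniteMeasure X => ∫ x, g x ∂(μ : Measure X)) inferInstance) _ _
    exact continuous_iInf_dom (i := H n) (continuous_iInf_dom (i := (hHP n).1)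
      continuous_induced_dom)
  have hUopen : ∀ n, IsOpen (U n) := fun n =>
    (hcont n).isOpen_preimage _ isOpen_Ioi
  have hUmono : Monotone U := by
    intro a b hab μ hμ
    exact lt_of_lt_of_le hμ (integral_mono ((H a).integrable _) ((H b).integrable _)
      (fun x => hHmono hab x))
  have hintrepr : ∀ n (μ : FiniteMeasure X),
      ∫⁻ x, ENNReal.ofReal (H n x) ∂(μ : Measure X)
        = ENNReal.ofReal (∫ x, H n x ∂(μ : Measure X)) := fun n μ =>
    (MeasureTheory.ofReal_integral_eq_lintegral_ofReal ((H n).integrable _)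
      (ae_of_all _ ((hHP n).2.1))).symm
  have hcover : K ⊆ ⋃ n, U n := by
    intro μ hμ
    have h2 : ENNReal.ofReal c⁻¹ < ⨆ n, ∫⁻ x, ENNReal.ofReal (H n x) ∂(μ : Measure X) := by
      rw [← hMCT]
      exact lt_of_lt_of_le (lt_of_lt_of_le (ENNReal.ofReal_lt_one.mpr (inv_lt_one_of_one_lt₀ hc)) le_rfl)
        (le_trans (hρ.2 μ hμ) le_rfl)
    obtain ⟨n, hn⟩ := lt_iSup_iff.mp h2
    rw [hintrepr n μ] at hn
    exact Set.mem_iUnion.mpr ⟨n,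
      (ENNReal.ofReal_lt_ofReal_iff_of_nonneg (inv_nonneg.mpr hc0.le)).mp hn⟩
  obtain ⟨F, hF⟩ := hK.elim_finite_subcover U hUopen hcover
  have hKU : K ⊆ U (F.sup id) := by
    intro μ hμ
    obtain ⟨n, hnF, hn⟩ := Set.mem_iUnion₂.mp (hF hμ)
    exact hUmono (Finset.le_sup (f := id) hnF) hn
  set N := F.sup id with hNdef
  -- Step 4: the witness `c • H N`.
  have hgval : ∀ x, (c • H N) x = c * H N x := fun x => by simp
  have hgofReal : ∀ x, ENNReal.ofReal ((c • H N) x)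
      = ENNReal.ofReal c * ENNReal.ofReal (H N x) := fun x => by
    rw [hgval x, ENNReal.ofReal_mul hc0.le]
  have hgcond : (c • H N) ∈ A ∧ (∀ x, 0 ≤ (c • H N) x) ∧
      ∀ μ ∈ K, 1 ≤ ∫⁻ x, ENNReal.ofReal ((c • H N) x) ∂(μ : Measure X) := by
    refine ⟨hA.smul_mem c (hHP N).1, fun x => ?_, fun μ hμ => ?_⟩
    · rw [hgval x]; exact mul_nonneg hc0.le ((hHP N).2.1 x)
    · have hNμ : c⁻¹ < ∫ x, H N x ∂(μ : Measure X) := hKU hμ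
      calc (1:ℝ≥0∞) = ENNReal.ofReal c * ENNReal.ofReal c⁻¹ := by
            rw [← ENNReal.ofReal_mul hc0.le, mul_inv_cancel₀ (ne_of_gt hc0), ENNReal.ofReal_one]
        _ ≤ ENNReal.ofReal c * ∫⁻ x, ENNReal.ofReal (H N x) ∂(μ : Measure X) := by
            refine mul_le_mul_right ?_ _
            rw [hintrepr N μ]
            exact ENNReal.ofReal_le_ofReal hNμ.le
        _ = ∫⁻ x, ENNReal.ofReal ((c • H N) x) ∂(μ : Measure X) := by
            rw [← MeasureTheory.lintegral_const_mul' _ _ ENNReal.ofReal_ne_top]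
            exact lintegral_congr fun x => (hgofReal x).symm
  refine le_trans (iInf₂_le (c • H N) hgcond) ?_
  calc ∫⁻ x, ENNReal.ofReal ((c • H N) x) ^ p ∂m
      ≤ ∫⁻ x, (ENNReal.ofReal c * ρ x) ^ p ∂m := by
        refine lintegral_mono fun x => ENNReal.rpow_le_rpow ?_ hp0
        rw [hgofReal x]
        exact mul_le_mul_right ((hHP N).2.2 x) _
    _ = ENNReal.ofReal c ^ p * ∫⁻ x, ρ x ^ p ∂m := by
        simp_rw [ENNReal.mul_rpow_of_nonneg _ _ hp0]
        exact MeasureTheory.lintegral_const_mul' _ _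
          (ENNReal.rpow_ne_top_of_nonneg hp0 ENNReal.ofReal_ne_top)

theorem stmt7 {X : Type*} [TopologicalSpace X] [PolishSpace X] [MeasurableSpace X] [BorelSpace X]
    (m : Measure X) [IsFiniteMeasureOnCompacts m] [m.InnerRegular]
    (A : Set (X →ᵇ ℝ)) (hA : IsAcceptable A)
    (p : ℝ) (hp : 1 ≤ p) (K : Set (FiniteMeasure X)) (hK : @IsCompact _ (tauA X A) K) :
    Mmod p m K = McMod p A m K := by
  refine le_antisymm ?_ ?_
  · -- easy direction: continuous admissible functions are admissible
    refine le_iInf₂ fun g hg => ?_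
    exact iInf₂_le (fun x => ENNReal.ofReal (g x))
      ⟨(ENNReal.continuous_ofReal.comp g.continuous).lowerSemicontinuous, hg.2.2⟩
  · refine le_iInf₂ fun ρ hρ => ?_
    set I := ∫⁻ x, ρ x ^ p ∂m with hI
    have key : ∀ k : ℕ, McMod p A m K ≤ ENNReal.ofReal (1 + 1/(k+1)) ^ p * I := by
      intro k
      refine mcMod_le_aux m A hA p hp K hK ρ hρ _ ?_
      have : (0:ℝ) < 1/(k+1) := by positivity
      linarith
    by_cases hItop : I = ∞
    · rw [hItop]; exact le_top
    have ht1 : Tendsto (fun k : ℕ => (1 + 1/(k+1) : ℝ)) atTop (𝓝 1) := by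
      have h := (tendsto_const_nhds : Tendsto (fun _ : ℕ => (1:ℝ)) atTop (𝓝 1)).add
        tendsto_one_div_add_atTop_nhds_zero_nat
      simpa using h
    have ht2 : Tendsto (fun k : ℕ => ENNReal.ofReal (1 + 1/(k+1)) ^ p * I) atTop (𝓝 I) := by
      have h3 : Tendsto (fun k : ℕ => ENNReal.ofReal (1 + 1/(k+1))) atTop (𝓝 1) := by
        have := (ENNReal.continuous_ofReal.tendsto 1).comp ht1
        simpa [Function.comp_def] using this
      have h4 : Tendsto (fun k : ℕ => ENNReal.ofReal (1 + 1/(k+1)) ^ p) atTop (𝓝 1) := by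
        have := h3.ennrpow_const p
        simpa using this
      have := ENNReal.Tendsto.mul_const h4 (Or.inr hItop)
      simpa using this
    exact ge_of_tendsto' ht2 key

end AMPaper

end
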